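/- arXiv:1807.08178 — 2 statements merged into one kernel-verified Lean document; each statement's English description precedes it below -/
import Mathlib

section
/- For every r ≥ 1, if H is an r-uniform hypergraph on a finite set X that is not 2-DP-colorable (i.e., some 2-fold cover F of H admits no F-coloring), then |H| ≥ 2^{r−1}. -/
open Finset

/-- The domain of a partial map `φ : X ⇀ Bool` (encoded as `X → Option Bool`). -/
def pdom {X : Type*} [Fintype X] (φ : X → Option Bool) : Finset X :=
  Finset.univ.filter (fun x => (φ x).isSome)

/-- A total function `f : X → Bool` extends the partial map `φ`. -/
def PExtends {X : Type*} (f : X → Bool) (φ : X → Option Bool) : Prop :=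
  ∀ x b, φ x = some b → f x = b

instance {X : Type*} [Fintype X] (f : X → Bool) : DecidablePred (PExtends f) :=
  fun φ => inferInstanceAs (Decidable (∀ x b, φ x = some b → f x = b))

/-- The weight of a family of partial maps: `∑ 2^{-|dom φ|}`. -/
noncomputable def weight {X : Type*} [Fintype X] (F : Finset (X → Option Bool)) : ℝ :=
  ∑ φ ∈ F, (1/2 : ℝ) ^ (pdom φ).card

/-- `F` is a 2-fold cover of the hypergraph `H`. -/
def IsCover {X : Type*} [Fintype X] (H : Finset (Finset X)) (F : Finset (X → Option Bool)) : Prop :=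
  (∀ φ ∈ F, pdom φ ∈ H) ∧
  (∀ φ ∈ F, ∀ ψ ∈ F, φ ≠ ψ → pdom φ = pdom ψ → ∀ x ∈ pdom φ, φ x ≠ ψ x)

lemma ext_card {X : Type*} [Fintype X] [DecidableEq X] (φ : X → Option Bool) :
    (Finset.univ.filter (fun f : X → Bool => PExtends f φ)).card
      = 2 ^ (Fintype.card X - (pdom φ).card) := by
  classical
  have key : (Finset.univ.filter (fun f : X → Bool => PExtends f φ)).card
      = (Finset.univ : Finset ({x : X // x ∉ pdom φ} → Bool)).card := by
    apply Finset.card_bij' (fun f _ => fun x => f x.1)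
      (fun g _ => fun x => if h : (φ x).isSome then (φ x).get h else g ⟨x, by simp [pdom, h]⟩)
    · intro f hf
      simp only [mem_filter, mem_univ, true_and] at hf
      funext x
      by_cases hx : (φ x).isSome
      · simp only [hx, dif_pos]
        obtain ⟨b, hb⟩ := Option.isSome_iff_exists.mp hx
        rw [hf x b hb]
        simp [hb]
      · simp [hx]
    · intro g _
      funext x
      have hx : ¬ (φ x.1).isSome := by
        have := x.2; simpa [pdom] using this
      simp [hx]
    · intro f _; exact mem_univ _
    · intro g _
      simp only [mem_filter, mem_univ, true_and]
      intro x b hb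
      simp [hb]
  rw [key, card_univ]
  rw [Fintype.card_fun, Fintype.card_bool]
  congr 1
  rw [Fintype.card_subtype]
  have hadd := Finset.card_filter_add_card_filter_not
    (s := (Finset.univ : Finset X)) (p := fun x => (φ x).isSome)
  have heq : (Finset.univ.filter (fun x => ¬ (φ x).isSome)).card
      = (Finset.univ.filter (fun x : X => x ∉ pdom φ)).card := by
    congr 1
    apply Finset.filter_congr
    intro x _
    simp [pdom]
  have hcu : (Finset.univ : Finset X).card = Fintype.card X := Finset.card_univ
  simp only [pdom] at *
  omega

theorem stmt_7 (r : ℕ) (hr : 1 ≤ r) {X : Type*} [Fintype X]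
    (H : Finset (Finset X)) (huniform : ∀ e ∈ H, e.card = r)
    (F : Finset (X → Option Bool)) (hcov : IsCover H F)
    (h : ∀ f : X → Bool, ∃ φ ∈ F, PExtends f φ) :
    2 ^ (r - 1) ≤ H.card := by
  classical
  obtain ⟨φ0, hφ0F, -⟩ := h (fun _ => true)
  have he0 : pdom φ0 ∈ H := hcov.1 φ0 hφ0F
  have hrn : r ≤ Fintype.card X := by
    rw [← huniform _ he0]
    simpa using Finset.card_le_card (Finset.subset_univ (pdom φ0))
  -- each fiber has at most two elements
  have fiber : ∀ e ∈ H, (F.filter (fun φ => pdom φ = e)).card ≤ 2 := by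
    intro e he
    have hene : e.Nonempty := Finset.card_pos.mp (by rw [huniform e he]; omega)
    obtain ⟨x0, hx0⟩ := hene
    have hle : (F.filter (fun φ => pdom φ = e)).card
        ≤ ({some true, some false} : Finset (Option Bool)).card := by
      apply Finset.card_le_card_of_injOn (fun φ => φ x0)
      · intro φ hφ
        simp only [Finset.coe_filter, Set.mem_setOf_eq] at hφ
        have hx : x0 ∈ pdom φ := hφ.2 ▸ hx0
        have hs : (φ x0).isSome := by simpa [pdom] using hx
        obtain ⟨b, hb⟩ := Option.isSome_iff_exists.mp hs
        cases b <;> simp [hb]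
      · intro φ hφ ψ hψ hval
        by_contra hne
        simp only [Finset.coe_filter, Set.mem_setOf_eq] at hφ hψ
        have hx : x0 ∈ pdom φ := hφ.2 ▸ hx0
        exact hcov.2 φ hφ.1 ψ hψ.1 hne (hφ.2.trans hψ.2.symm) x0 hx hval
    simpa using hle
  have hFcard : F.card ≤ 2 * H.card := by
    rw [Finset.card_eq_sum_card_fiberwise hcov.1]
    calc ∑ e ∈ H, (F.filter (fun φ => pdom φ = e)).card
        ≤ ∑ _e ∈ H, 2 := Finset.sum_le_sum fiber
      _ = 2 * H.card := by rw [Finset.sum_const, smul_eq_mul, mul_comm]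
  -- lower bound on |F|
  have cover : (Finset.univ : Finset (X → Bool))
      ⊆ F.biUnion (fun φ => Finset.univ.filter (fun f => PExtends f φ)) := by
    intro f _
    obtain ⟨φ, hφ, hext⟩ := h f
    exact Finset.mem_biUnion.mpr ⟨φ, hφ, Finset.mem_filter.mpr ⟨Finset.mem_univ f, hext⟩⟩
  have hlow : 2 ^ (Fintype.card X) ≤ F.card * 2 ^ (Fintype.card X - r) := by
    calc (2 : ℕ) ^ Fintype.card X = (Finset.univ : Finset (X → Bool)).card := by
          rw [Finset.card_univ, Fintype.card_fun, Fintype.card_bool]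
      _ ≤ (F.biUnion (fun φ => Finset.univ.filter (fun f => PExtends f φ))).card :=
          Finset.card_le_card cover
      _ ≤ ∑ φ ∈ F, (Finset.univ.filter (fun f => PExtends f φ)).card :=
          Finset.card_biUnion_le
      _ = ∑ φ ∈ F, 2 ^ (Fintype.card X - r) := by
          apply Finset.sum_congr rfl
          intro φ hφ
          rw [ext_card, huniform _ (hcov.1 φ hφ)]
      _ = F.card * 2 ^ (Fintype.card X - r) := by
          rw [Finset.sum_const, smul_eq_mul]
  have hF2r : 2 ^ r ≤ F.card := by
    have h2 : 0 < 2 ^ (Fintype.card X - r) := Nat.pow_pos (by norm_num)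
    have hmul : 2 ^ r * 2 ^ (Fintype.card X - r) ≤ F.card * 2 ^ (Fintype.card X - r) := by
      rwa [← pow_add, Nat.add_sub_cancel' hrn]
    exact Nat.le_of_mul_le_mul_right hmul h2
  have hfin : 2 ^ r ≤ 2 * H.card := hF2r.trans hFcard
  have hsplit : 2 ^ (r - 1) * 2 = 2 ^ r := by
    rw [← pow_succ]; congr 1; omega
  have : 2 ^ (r - 1) * 2 ≤ H.card * 2 := by rw [hsplit]; omega
  exact Nat.le_of_mul_le_mul_right this (by norm_num)
end

section
/- For all r ≥ 1, m̃_2(r) ≤ 2^{r−1} + 2^{⌊r/2⌋}: there exists an r-uniform hypergraph H with at most 2^{r−1} + 2^{⌊r/2⌋} edges and a 2-fold cover F of H with no F-coloring. -/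
open Finset

def bind2 (b : Bool) : ZMod 2 := if b then 1 else 0

lemma bind2_xor (a b : Bool) : bind2 (xor a b) = bind2 a + bind2 b := by
  cases a <;> cases b <;> decide

lemma bind2_eq_zero {b : Bool} (h : bind2 b = 0) : b = false := by
  cases b
  · rfl
  · exact absurd h (by decide)

lemma zmod2_cases (x : ZMod 2) : x = 0 ∨ x = 1 := by
  fin_cases x
  · exact Or.inl rfl
  · exact Or.inr rfl

section cyc
variable {n : ℕ} [NeZero n]

lemma val_add_one_of_ne {x : ZMod n} (h : x + 1 ≠ 0) : (x + 1).val = x.val + 1 := by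
  rcases n with _ | m
  · exact absurd rfl (NeZero.ne 0)
  rcases m with _ | m
  · exfalso
    apply h
    have h0 : (x+1).val = 0 := by
      have := ZMod.val_lt (x+1)
      omega
    exact (ZMod.val_eq_zero _).mp h0
  haveI : Fact (1 < m + 2) := ⟨by omega⟩
  have hv : (x + 1).val = (x.val + (1 : ZMod (m+2)).val) % (m+2) := ZMod.val_add x 1
  rw [ZMod.val_one] at hv
  have hx : x.val < m + 2 := ZMod.val_lt x
  rcases Nat.lt_or_ge (x.val + 1) (m+2) with hlt | hge
  · rw [hv, Nat.mod_eq_of_lt hlt]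
  · have hx1 : x.val = m + 1 := by omega
    have hxe : x = ((m+1 : ℕ) : ZMod (m+2)) := by
      have h2 := ZMod.natCast_rightInverse (n := m+2) x
      rw [← h2, hx1]
    exfalso
    apply h
    rw [hxe]
    have h3 : ((m+1 : ℕ) : ZMod (m+2)) + 1 = ((m+2 : ℕ) : ZMod (m+2)) := by push_cast; ring
    rw [h3, ZMod.natCast_self]

lemma cast_val (x : ZMod n) : ((x.val : ℕ) : ZMod n) = x := ZMod.natCast_rightInverse x

lemma sum_zmod_eq_range (f : ZMod n → ZMod 2) :
    ∑ i : ZMod n, f i = ∑ u ∈ Finset.range n, f u :=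
  Finset.sum_nbij' (fun i => i.val) (fun u => ((u:ℕ) : ZMod n))
    (fun a _ => Finset.mem_range.mpr (ZMod.val_lt a))
    (fun _ _ => Finset.mem_univ _)
    (fun a _ => cast_val a)
    (fun a ha => ZMod.val_cast_of_lt (Finset.mem_range.mp ha))
    (fun a _ => by rw [cast_val a])

lemma cycle_dichotomy (V : ZMod n → Bool → Bool) :
    (∃ s : ZMod n → Bool, ∀ i, V i (s i) = s (i + 1)) ∨
    ((∀ i, V i true = !(V i false)) ∧ ∑ i : ZMod n, bind2 (V i false) = 1) := by
  by_cases hinj : ∀ i, V i true = !(V i false)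
  · by_cases hpar : ∑ i : ZMod n, bind2 (V i false) = 1
    · exact Or.inr ⟨hinj, hpar⟩
    · left
      have hVx : ∀ i x, V i x = xor x (V i false) := by
        intro i x
        cases x
        · simp
        · rw [hinj i]; cases V i false <;> rfl
      set d : ZMod n → Bool := fun i => V i false with hd
      let σ : ℕ → Bool := fun t => Nat.rec false (fun t' acc => xor acc (d ((t':ℕ) : ZMod n))) t
      have hσsucc : ∀ t, σ (t+1) = xor (σ t) (d ((t:ℕ) : ZMod n)) := fun t => rfl
      have hσsum : ∀ t, bind2 (σ t) = ∑ u ∈ Finset.range t, bind2 (d ((u:ℕ) : ZMod n)) := by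
        intro t
        induction t with
        | zero => simp only [Finset.range_zero, Finset.sum_empty]; rfl
        | succ t ih => rw [hσsucc, bind2_xor, ih, Finset.sum_range_succ]
      have hpar0 : ∑ i : ZMod n, bind2 (d i) = 0 := by
        rcases zmod2_cases (∑ i : ZMod n, bind2 (d i)) with h | h
        · exact h
        · exact absurd h hpar
      have hσn : σ n = false := by
        apply bind2_eq_zero
        rw [hσsum]
        exact (sum_zmod_eq_range (fun i => bind2 (d i))).symm.trans hpar0
      refine ⟨fun k => σ k.val, fun i => ?_⟩
      show V i (σ i.val) = σ (i+1).val
      rw [hVx]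
      by_cases hi : i + 1 = 0
      · have hival : i.val + 1 = n := by
          have hdvd : n ∣ i.val + 1 := by
            rw [← ZMod.natCast_eq_zero_iff]
            push_cast
            rw [cast_val]
            exact hi
          have hlt : i.val < n := ZMod.val_lt i
          rcases hdvd with ⟨k, hk⟩
          have hn := NeZero.pos n
          rcases k with _ | k
          · omega
          · rcases k with _ | k
            · omega
            · nlinarith
        have h0 : (i+1).val = 0 := by rw [hi]; exact ZMod.val_zero
        rw [h0]
        have hstep : σ (i.val + 1) = xor (σ i.val) (d i) := by
          have := hσsucc i.val
          rw [cast_val] at this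
          exact this
        rw [hival] at hstep
        rw [hσn] at hstep
        show xor (σ i.val) (d i) = σ 0
        rw [← hstep]
        rfl
      · have hval : (i+1).val = i.val + 1 := val_add_one_of_ne hi
        rw [hval]
        have hstep := hσsucc i.val
        rw [cast_val] at hstep
        exact hstep.symm
  · left
    push_neg at hinj
    obtain ⟨i₀, hi₀⟩ := hinj
    have hconst : ∃ v, ∀ x, V i₀ x = v := by
      refine ⟨V i₀ false, fun x => ?_⟩
      cases x
      · rfl
      · revert hi₀; cases h1 : V i₀ true <;> cases h2 : V i₀ false <;> simp
    obtain ⟨v, hv⟩ := hconst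
    let σ : ℕ → Bool := fun t => Nat.rec v (fun t' acc => V (i₀ + 1 + ((t':ℕ) : ZMod n)) acc) t
    have hσsucc : ∀ t, σ (t+1) = V (i₀ + 1 + ((t:ℕ) : ZMod n)) (σ t) := fun t => rfl
    refine ⟨fun k => σ (k - (i₀ + 1)).val, fun i => ?_⟩
    show V i (σ (i - (i₀+1)).val) = σ (i + 1 - (i₀+1)).val
    by_cases hi : i = i₀
    · subst hi
      have h0 : (i + 1 - (i + 1)) = 0 := by ring
      rw [h0, ZMod.val_zero, hv]
      rfl
    · have hs1 : (i + 1 - (i₀ + 1)) = (i - (i₀+1)) + 1 := by ring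
      have hx1 : (i - (i₀+1)) + 1 ≠ 0 := by
        intro h
        apply hi
        have h2 : i - i₀ = 0 := by rw [← h]; ring
        exact sub_eq_zero.mp h2
      rw [hs1, val_add_one_of_ne hx1]
      have hstep := hσsucc (i - (i₀+1)).val
      rw [cast_val] at hstep
      have hix : i₀ + 1 + (i - (i₀+1)) = i := by ring
      rw [hix] at hstep
      exact hstep.symm
end cyc

/-! ### Strict design -/

instance twoCNeZero (c : ℕ) [NeZero c] : NeZero (2*c) :=
  ⟨by have := NeZero.pos c; omega⟩

section strict
variable (c : ℕ) [NeZero c]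

/-- the two coordinates of matching-pair `i`: `pairC i false = i`, `pairC i true = i + c` -/
def pairC (i : ZMod c) (h : Bool) : ZMod (2*c) := ((i.val + cond h c 0 : ℕ) : ZMod (2*c))

lemma pairC_val (i : ZMod c) (h : Bool) : (pairC c i h).val = i.val + cond h c 0 := by
  have hi : i.val < c := ZMod.val_lt i
  apply ZMod.val_cast_of_lt
  cases h <;> simp <;> omega

lemma pairC_inj {i i' : ZMod c} {h h' : Bool} (he : pairC c i h = pairC c i' h') :
    i = i' ∧ h = h' := by
  have hv : (pairC c i h).val = (pairC c i' h').val := by rw [he]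
  rw [pairC_val, pairC_val] at hv
  have hi : i.val < c := ZMod.val_lt i
  have hi' : i'.val < c := ZMod.val_lt i'
  have hvv : i.val = i'.val ∧ h = h' := by
    cases h <;> cases h' <;> simp at hv ⊢ <;> omega
  refine ⟨?_, hvv.2⟩
  have := hvv.1
  calc i = ((i.val : ℕ) : ZMod c) := (cast_val i).symm
    _ = ((i'.val : ℕ) : ZMod c) := by rw [this]
    _ = i' := cast_val i'

def twistC : Bool := decide (c % 2 = 1)

/-- pattern of the extras cube indexed by τ, at matching index i -/
def patC (τ : ZMod c → Bool) (i : ZMod c) : Bool :=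
  xor (τ (i+1)) (if i = 0 then (twistC c && τ 0) else false)

def jjC (τ : ZMod c → Bool) (i : ZMod c) : ZMod (2*c) := pairC c i (τ i)

/-- recover the matching index from a coordinate -/
def iOfC (x : ZMod (2*c)) : ZMod c := ((x.val : ℕ) : ZMod c)

lemma iOfC_pairC (i : ZMod c) (h : Bool) : iOfC c (pairC c i h) = i := by
  unfold iOfC
  rw [pairC_val]
  cases h
  · simp [cast_val]
  · push_cast
    simp [ZMod.natCast_self, cast_val]

/-- strict design index: mains (inl) and extras (inr) -/
abbrev Ic := (ZMod (2*c) → Bool) ⊕ (ZMod c → Bool)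

def sdom : Ic c → Finset (ZMod (2*c) × Bool)
  | .inl s => Finset.univ.image (fun i => (i, s i))
  | .inr τ => Finset.univ.image (fun p : ZMod c × Bool => (jjC c τ p.1, p.2))

def sval : Ic c → ZMod (2*c) × Bool → Bool
  | .inl s => fun u => s (u.1 + 1)
  | .inr τ => fun u => xor (patC c τ (iOfC c u.1)) u.2

lemma mem_sdom_inl {s : ZMod (2*c) → Bool} {u : ZMod (2*c) × Bool} :
    u ∈ sdom c (.inl s) ↔ s u.1 = u.2 := by
  simp only [sdom, Finset.mem_image, Finset.mem_univ, true_and]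
  constructor
  · rintro ⟨i, rfl⟩; rfl
  · intro h; exact ⟨u.1, by rw [h]⟩

lemma mem_sdom_inr {τ : ZMod c → Bool} {u : ZMod (2*c) × Bool} :
    u ∈ sdom c (.inr τ) ↔ ∃ i, u.1 = jjC c τ i := by
  simp only [sdom, Finset.mem_image, Finset.mem_univ, true_and]
  constructor
  · rintro ⟨⟨i, b⟩, rfl⟩; exact ⟨i, rfl⟩
  · rintro ⟨i, hi⟩; exact ⟨(i, u.2), by rw [← hi]⟩

lemma card_sdom (idx : Ic c) : (sdom c idx).card = 2*c := by
  rcases idx with s | τ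
  · rw [sdom]
    rw [Finset.card_image_of_injective _ (fun a b hab => (Prod.mk.injEq _ _ _ _).mp hab |>.1)]
    simp [ZMod.card]
  · rw [sdom]
    rw [Finset.card_image_of_injective _ ?hinj]
    · simp [ZMod.card, Fintype.card_prod]; ring
    · intro p q hpq
      obtain ⟨h1, h2⟩ := (Prod.mk.injEq _ _ _ _).mp hpq
      obtain ⟨hi, -⟩ := pairC_inj c h1
      exact Prod.ext hi h2

lemma sdom_injective : Function.Injective (sdom c) := by
  intro a b hab
  rcases a with s | τ <;> rcases b with s' | τ'
  · congr 1
    funext i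
    have h1 : (i, s i) ∈ sdom c (.inl s) := mem_sdom_inl c |>.mpr rfl
    rw [hab] at h1
    exact ((mem_sdom_inl c).mp h1).symm
  · exfalso
    have h1 : (jjC c τ' 0, true) ∈ sdom c (.inr τ') := (mem_sdom_inr c).mpr ⟨0, rfl⟩
    have h2 : (jjC c τ' 0, false) ∈ sdom c (.inr τ') := (mem_sdom_inr c).mpr ⟨0, rfl⟩
    rw [← hab] at h1 h2
    have := (mem_sdom_inl c).mp h1
    have := (mem_sdom_inl c).mp h2
    simp_all
  · exfalso
    have h1 : (jjC c τ 0, true) ∈ sdom c (.inr τ) := (mem_sdom_inr c).mpr ⟨0, rfl⟩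
    have h2 : (jjC c τ 0, false) ∈ sdom c (.inr τ) := (mem_sdom_inr c).mpr ⟨0, rfl⟩
    rw [hab] at h1 h2
    have := (mem_sdom_inl c).mp h1
    have := (mem_sdom_inl c).mp h2
    simp_all
  · congr 1
    funext i
    -- τ i = τ' i via membership of (pairC i true, false)
    by_cases ht : τ i = τ' i
    · exact ht
    · exfalso
      have h1 : (jjC c τ i, false) ∈ sdom c (.inr τ) := (mem_sdom_inr c).mpr ⟨i, rfl⟩
      rw [hab] at h1
      obtain ⟨i', hi'⟩ := (mem_sdom_inr c).mp h1
      have := pairC_inj c hi'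
      rw [← this.1] at this
      exact ht (this.2.trans rfl) |>.elim
end strict

section strictcover
variable (c : ℕ) [NeZero c]

lemma pair_sum_bij (F : ZMod (2*c) → ZMod 2) :
    ∑ x : ZMod (2*c), F x = ∑ p : ZMod c × Bool, F (pairC c p.1 p.2) := by
  apply Finset.sum_nbij' (fun x => ((iOfC c x, decide (c ≤ x.val)) : ZMod c × Bool))
      (fun p => pairC c p.1 p.2)
  · intro a _; exact Finset.mem_univ _
  · intro a _; exact Finset.mem_univ _
  · -- left inverse : pairC (iOfC x) (c ≤ x.val) = x
    intro x _
    have hx : x.val < 2*c := ZMod.val_lt x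
    have hc := NeZero.pos c
    have hiv : (iOfC c x).val = x.val % c := by
      unfold iOfC; exact ZMod.val_natCast _ _
    have hval : (pairC c (iOfC c x) (decide (c ≤ x.val))).val = x.val := by
      rw [pairC_val, hiv]
      by_cases hcx : c ≤ x.val
      · rw [decide_eq_true hcx]
        have hmod : x.val % c = x.val - c := by
          rw [Nat.mod_eq_sub_mod (by omega)]
          exact Nat.mod_eq_of_lt (by omega)
        simp only [cond_true]
        omega
      · rw [decide_eq_false hcx]
        simp only [cond_false]
        have hmod : x.val % c = x.val := Nat.mod_eq_of_lt (by omega)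
        omega
    calc pairC c (iOfC c x) (decide (c ≤ x.val))
        = (((pairC c (iOfC c x) (decide (c ≤ x.val))).val : ℕ) : ZMod (2*c)) := (cast_val _).symm
      _ = ((x.val : ℕ) : ZMod (2*c)) := by rw [hval]
      _ = x := cast_val x
  · -- right inverse
    intro p _
    have h1 : iOfC c (pairC c p.1 p.2) = p.1 := iOfC_pairC c p.1 p.2
    have h2 : decide (c ≤ (pairC c p.1 p.2).val) = p.2 := by
      rw [pairC_val]
      have := ZMod.val_lt p.1
      cases hp : p.2
      · rw [decide_eq_false]
        simp only [cond_false]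
        omega
      · rw [decide_eq_true]
        simp only [cond_true]
        omega
    calc (iOfC c (pairC c p.1 p.2), decide (c ≤ (pairC c p.1 p.2).val))
        = (p.1, p.2) := by rw [h1, h2]
      _ = p := rfl
  · intro x _
    congr 1
    have hx : x.val < 2*c := ZMod.val_lt x
    have hc := NeZero.pos c
    have hiv : (iOfC c x).val = x.val % c := by unfold iOfC; exact ZMod.val_natCast _ _
    have hval : (pairC c (iOfC c x) (decide (c ≤ x.val))).val = x.val := by
      rw [pairC_val, hiv]
      by_cases hcx : c ≤ x.val
      · rw [decide_eq_true hcx]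
        have hmod : x.val % c = x.val - c := by
          rw [Nat.mod_eq_sub_mod (by omega)]
          exact Nat.mod_eq_of_lt (by omega)
        simp only [cond_true]
        omega
      · rw [decide_eq_false hcx]
        simp only [cond_false]
        have hmod : x.val % c = x.val := Nat.mod_eq_of_lt (by omega)
        omega
    calc x = ((x.val : ℕ) : ZMod (2*c)) := (cast_val x).symm
      _ = (((pairC c (iOfC c x) (decide (c ≤ x.val))).val : ℕ) : ZMod (2*c)) := by rw [hval]
      _ = pairC c (iOfC c x) (decide (c ≤ x.val)) := cast_val _

lemma bind2_twist : bind2 (twistC c) = ((c : ℕ) : ZMod 2) := by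
  unfold twistC
  rw [← ZMod.natCast_mod c 2]
  rcases Nat.mod_two_eq_zero_or_one c with h | h <;> rw [h] <;> simp [bind2]

/-- The strict covering lemma. -/
lemma strict_cover (G : ZMod (2*c) × Bool → Bool) :
    ∃ idx : Ic c, ∀ u ∈ sdom c idx, G u = sval c idx u := by
  rcases cycle_dichotomy (fun (x : ZMod (2*c)) (v : Bool) => G (x, v)) with ⟨s, hs⟩ | ⟨hinj, hpar⟩
  · refine ⟨.inl s, fun u hu => ?_⟩
    rw [mem_sdom_inl] at hu
    have : u = (u.1, s u.1) := by rw [hu]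
    rw [this]
    exact hs u.1
  · -- extras
    set V' : ZMod c → Bool → Bool :=
      fun i x => xor (G (pairC c i x, false)) (if i = 0 then (twistC c && x) else false) with hV'
    rcases cycle_dichotomy V' with ⟨τ, hτ⟩ | ⟨hinj', hpar'⟩
    · refine ⟨.inr τ, fun u hu => ?_⟩
      rw [mem_sdom_inr] at hu
      obtain ⟨i, hi⟩ := hu
      have hu1 : u = (jjC c τ i, u.2) := Prod.ext hi rfl
      have hpatf : G (jjC c τ i, false) = patC c τ i := by
        have h := hτ i
        rw [hV'] at h
        simp only at h
        unfold patC
        unfold jjC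
        by_cases hi0 : i = 0
        · subst hi0
          simp only [if_pos rfl] at h ⊢
          -- h : xor (G (pairC c 0 (τ 0), false)) (twistC c && τ 0) = τ (0+1)
          cases hG : G (pairC c 0 (τ 0), false) <;> cases ht : (twistC c && τ 0) <;>
            rw [hG, ht] at h <;> simp at h ⊢ <;> simp [h]
        · simp only [if_neg hi0] at h ⊢
          cases hG : G (pairC c i (τ i), false) <;> rw [hG] at h <;> simp at h <;> simp [h]
      rw [hu1]
      have hsv : sval c (.inr τ) (jjC c τ i, u.2) = xor (patC c τ i) u.2 := by
        show xor (patC c τ (iOfC c (jjC c τ i))) u.2 = _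
        rw [jjC, iOfC_pairC]
      rw [hsv]
      cases hb : u.2
      · simpa using hpatf
      · have h2 := hinj (jjC c τ i)
        rw [h2, hpatf]
        cases patC c τ i <;> rfl
    · -- parity contradiction
      exfalso
      have hsum : ∑ x : ZMod (2*c), bind2 (G (x, false))
          = ∑ p : ZMod c × Bool, bind2 (G (pairC c p.1 p.2, false)) :=
        pair_sum_bij c (fun x => bind2 (G (x, false)))
      have hprod : ∑ p : ZMod c × Bool, bind2 (G (pairC c p.1 p.2, false))
          = ∑ i : ZMod c, (bind2 (G (pairC c i true, false)) + bind2 (G (pairC c i false, false))) := by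
        rw [Fintype.sum_prod_type]
        exact Finset.sum_congr rfl (fun i _ => Fintype.sum_bool _)
      have hterm : ∀ i : ZMod c,
          bind2 (G (pairC c i true, false)) + bind2 (G (pairC c i false, false))
          = 1 + bind2 (if i = 0 then twistC c else false) := by
        intro i
        have h1 := hinj' i
        have hVf : V' i false = G (pairC c i false, false) := by
          rw [hV']
          simp
        have hVt : V' i true = xor (G (pairC c i true, false)) (if i = 0 then twistC c else false) := by
          rw [hV']
          by_cases hi0 : i = 0 <;> simp [hi0]
        rw [hVf, hVt] at h1
        set a := G (pairC c i false, false)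
        set b := G (pairC c i true, false)
        set w := if i = 0 then twistC c else false
        have hb : b = xor (!a) w := by
          cases hw : w <;> cases ha : a <;> rw [hw, ha] at h1 <;> simp at h1 <;> simp [h1]
        rw [hb]
        cases ha : a <;> cases hw : w <;> decide
      have hfinal : ∑ i : ZMod c, (bind2 (G (pairC c i true, false)) + bind2 (G (pairC c i false, false)))
          = 0 := by
        calc ∑ i : ZMod c, (bind2 (G (pairC c i true, false)) + bind2 (G (pairC c i false, false)))
            = ∑ i : ZMod c, (1 + bind2 (if i = 0 then twistC c else false)) :=
              Finset.sum_congr rfl (fun i _ => hterm i)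
          _ = (∑ _i : ZMod c, (1 : ZMod 2)) + ∑ i : ZMod c, bind2 (if i = 0 then twistC c else false) :=
              Finset.sum_add_distrib
          _ = ((c : ℕ) : ZMod 2) + bind2 (twistC c) := by
              congr 1
              · rw [Finset.sum_const, Finset.card_univ, ZMod.card, nsmul_eq_mul, mul_one]
              · have : ∀ i : ZMod c, bind2 (if i = 0 then twistC c else false)
                    = if i = 0 then bind2 (twistC c) else 0 := by
                  intro i
                  by_cases hi0 : i = 0 <;> simp [hi0, bind2]
                rw [Finset.sum_congr rfl (fun i _ => this i)]
                rw [Finset.sum_ite_eq' Finset.univ (0 : ZMod c) (fun _ => bind2 (twistC c))]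
                simp
          _ = ((c : ℕ) : ZMod 2) + ((c : ℕ) : ZMod 2) := by rw [bind2_twist]
          _ = 0 := by
              have : ∀ z : ZMod 2, z + z = 0 := by decide
              exact this _
      have hone : (1 : ZMod 2) = 0 := by
        have hL : ∑ x : ZMod (2*c), bind2 (G (x, false)) = 1 := hpar
        rw [hsum, hprod, hfinal] at hL
        exact hL.symm
      exact absurd hone (by decide)
end strictcover

/-! ### Assembly -/

section assembly
variable (c : ℕ) [NeZero c] (C : Type) [Fintype C] [DecidableEq C]

abbrev Xt := (Unit ⊕ C) ⊕ ((C → Bool) × (ZMod (2*c) × Bool))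

abbrev Et := (C → Bool) × Ic c

def edom (e : Et c C) : Finset (Xt c C) :=
  (Finset.univ.map ⟨Sum.inl, Sum.inl_injective⟩) ∪
  ((sdom c e.2).map ⟨fun u => Sum.inr (e.1, u), by
      intro a b hab
      simpa using hab⟩)

def mkfn (e : Et c C) (fl : Bool) : Xt c C → Option Bool :=
  fun x => match x with
  | .inl (.inl _) => some fl
  | .inl (.inr t) => some (xor (e.1 t) fl)
  | .inr q => if q.1 = e.1 ∧ q.2 ∈ sdom c e.2 then some (xor (sval c e.2 q.2) fl) else none

lemma mem_edom_inl (e : Et c C) (y : Unit ⊕ C) : (Sum.inl y) ∈ edom c C e := by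
  unfold edom
  rw [Finset.mem_union]
  left
  simp

lemma mem_edom_inr (e : Et c C) (κ : C → Bool) (u : ZMod (2*c) × Bool) :
    (Sum.inr (κ, u) : Xt c C) ∈ edom c C e ↔ (κ = e.1 ∧ u ∈ sdom c e.2) := by
  unfold edom
  rw [Finset.mem_union]
  simp only [Finset.mem_map, Finset.mem_univ, Function.Embedding.coeFn_mk, true_and]
  constructor
  · rintro (⟨y, hy⟩ | ⟨u', hu', he⟩)
    · exact absurd hy (by simp)
    · have he2 : (e.1, u') = (κ, u) := Sum.inr.inj he
      have h1 : e.1 = κ := congrArg Prod.fst he2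
      have h2 : u' = u := congrArg Prod.snd he2
      exact ⟨h1.symm, h2 ▸ hu'⟩
  · rintro ⟨rfl, hu⟩
    right
    exact ⟨u, hu, rfl⟩

lemma pdom_mk (e : Et c C) (fl : Bool) : pdom (mkfn c C e fl) = edom c C e := by
  ext x
  rw [pdom, Finset.mem_filter]
  simp only [Finset.mem_univ, true_and]
  rcases x with (y | t) | ⟨κ, u⟩
  · constructor
    · intro _; exact mem_edom_inl c C e (Sum.inl y)
    · intro _; rfl
  · constructor
    · intro _; exact mem_edom_inl c C e (Sum.inr t)
    · intro _; rfl
  · rw [mem_edom_inr]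
    have hm : mkfn c C e fl (Sum.inr (κ, u))
        = if κ = e.1 ∧ u ∈ sdom c e.2 then some (xor (sval c e.2 u) fl) else none := rfl
    rw [hm]
    by_cases h : κ = e.1 ∧ u ∈ sdom c e.2
    · rw [if_pos h]
      simp [h]
    · rw [if_neg h]
      simp [h]

lemma edom_injective : Function.Injective (edom c C) := by
  intro e e' he
  obtain ⟨κ, idx⟩ := e
  obtain ⟨κ', idx'⟩ := e'
  -- get a witness u in sdom idx
  have hne : (sdom c idx).Nonempty := by
    rcases idx with s | τ
    · exact ⟨((0:ZMod (2*c)), s 0), (mem_sdom_inl c).mpr rfl⟩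
    · exact ⟨(jjC c τ 0, false), (mem_sdom_inr c).mpr ⟨0, rfl⟩⟩
  obtain ⟨u, hu⟩ := hne
  have h1 : (Sum.inr (κ, u) : Xt c C) ∈ edom c C (κ, idx) := (mem_edom_inr c C _ κ u).mpr ⟨rfl, hu⟩
  rw [he] at h1
  have h2 := (mem_edom_inr c C _ κ u).mp h1
  have hκ : κ = κ' := h2.1
  subst hκ
  have hdom : sdom c idx = sdom c idx' := by
    ext v
    constructor
    · intro hv
      have := (mem_edom_inr c C (κ, idx) κ v).mpr ⟨rfl, hv⟩
      rw [he] at this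
      exact ((mem_edom_inr c C _ κ v).mp this).2
    · intro hv
      have := (mem_edom_inr c C (κ, idx') κ v).mpr ⟨rfl, hv⟩
      rw [← he] at this
      exact ((mem_edom_inr c C _ κ v).mp this).2
  rw [sdom_injective c hdom]

lemma card_edom (e : Et c C) : (edom c C e).card = 1 + Fintype.card C + 2*c := by
  unfold edom
  rw [Finset.card_union_of_disjoint]
  · rw [Finset.card_map, Finset.card_map, Finset.card_univ, Fintype.card_sum, card_sdom]
    simp
  · rw [Finset.disjoint_left]
    rintro x hx hx'
    simp only [Finset.mem_map, Finset.mem_univ, Function.Embedding.coeFn_mk, true_and] at hx hx'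
    obtain ⟨y, rfl⟩ := hx
    obtain ⟨u, -, hu⟩ := hx'
    exact absurd hu (by simp)

def Hfam : Finset (Finset (Xt c C)) := Finset.univ.image (edom c C)

def Ffam : Finset (Xt c C → Option Bool) :=
  Finset.univ.image (fun p : Et c C × Bool => mkfn c C p.1 p.2)

lemma cover_lemma : ∀ f : Xt c C → Bool, ∃ φ ∈ Ffam c C, PExtends f φ := by
  intro f
  set ζ : Bool := f (Sum.inl (Sum.inl ())) with hζ
  set κ : C → Bool := fun t => xor (f (Sum.inl (Sum.inr t))) ζ with hκ
  set G : ZMod (2*c) × Bool → Bool := fun u => xor (f (Sum.inr (κ, u))) ζ with hG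
  obtain ⟨idx, hidx⟩ := strict_cover c G
  refine ⟨mkfn c C (κ, idx) ζ, Finset.mem_image.mpr ⟨((κ, idx), ζ), Finset.mem_univ _, rfl⟩, ?_⟩
  intro x b hx
  rcases x with (y | t) | ⟨κ', u⟩
  · -- block first coordinate
    have : mkfn c C (κ, idx) ζ (Sum.inl (Sum.inl y)) = some ζ := rfl
    rw [this] at hx
    obtain rfl : ζ = b := Option.some.inj hx
    show f (Sum.inl (Sum.inl y)) = ζ
    rw [hζ]
  · have : mkfn c C (κ, idx) ζ (Sum.inl (Sum.inr t)) = some (xor (κ t) ζ) := rfl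
    rw [this] at hx
    obtain rfl : xor (κ t) ζ = b := Option.some.inj hx
    show f (Sum.inl (Sum.inr t)) = xor (κ t) ζ
    simp only [hκ]
    simp only [Bool.xor_assoc, Bool.xor_self, Bool.xor_false]
  · have hm : mkfn c C (κ, idx) ζ (Sum.inr (κ', u))
        = if κ' = κ ∧ u ∈ sdom c idx then some (xor (sval c idx u) ζ) else none := rfl
    rw [hm] at hx
    by_cases h : κ' = κ ∧ u ∈ sdom c idx
    · rw [if_pos h] at hx
      obtain rfl : xor (sval c idx u) ζ = b := Option.some.inj hx
      have hGu : G u = sval c idx u := hidx u h.2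
      show f (Sum.inr (κ', u)) = xor (sval c idx u) ζ
      rw [h.1, ← hGu]
      simp only [hG]
      simp only [Bool.xor_assoc, Bool.xor_self, Bool.xor_false]
    · rw [if_neg h] at hx
      exact absurd hx (by simp)

lemma iscover_lemma : IsCover (Hfam c C) (Ffam c C) := by
  constructor
  · intro φ hφ
    obtain ⟨⟨e, fl⟩, -, rfl⟩ := Finset.mem_image.mp hφ
    rw [pdom_mk]
    exact Finset.mem_image.mpr ⟨e, Finset.mem_univ _, rfl⟩
  · intro φ hφ ψ hψ hne hpd
    obtain ⟨⟨e, fl⟩, -, rfl⟩ := Finset.mem_image.mp hφ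
    obtain ⟨⟨e', fl'⟩, -, rfl⟩ := Finset.mem_image.mp hψ
    rw [pdom_mk, pdom_mk] at hpd
    obtain rfl : e = e' := edom_injective c C hpd
    have hfl : fl ≠ fl' := by
      intro h
      exact hne (by rw [h])
    intro x hx
    rw [pdom_mk] at hx
    rcases x with (y | t) | ⟨κ', u⟩
    · show some fl ≠ some fl'
      simp [hfl]
    · show some (xor (e.1 t) fl) ≠ some (xor (e.1 t) fl')
      cases e.1 t <;> cases fl <;> cases fl' <;> simp_all
    · rw [mem_edom_inr] at hx
      show (if κ' = e.1 ∧ u ∈ sdom c e.2 then some (xor (sval c e.2 u) fl) else none)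
        ≠ (if κ' = e.1 ∧ u ∈ sdom c e.2 then some (xor (sval c e.2 u) fl') else none)
      rw [if_pos hx, if_pos hx]
      cases sval c e.2 u <;> cases fl <;> cases fl' <;> simp_all

lemma card_Hfam : (Hfam c C).card ≤ 2 ^ (Fintype.card C) * (2 ^ (2*c) + 2 ^ c) := by
  calc (Hfam c C).card ≤ (Finset.univ : Finset (Et c C)).card := Finset.card_image_le
    _ = Fintype.card (Et c C) := Finset.card_univ
    _ = 2 ^ (Fintype.card C) * (2 ^ (2*c) + 2 ^ c) := by
        rw [Fintype.card_prod, Fintype.card_sum, Fintype.card_fun, Fintype.card_fun,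
          Fintype.card_fun, Fintype.card_bool, ZMod.card, ZMod.card]

lemma card_edges (e : Finset (Xt c C)) (he : e ∈ Hfam c C) : e.card = 1 + Fintype.card C + 2*c := by
  obtain ⟨e', -, rfl⟩ := Finset.mem_image.mp he
  exact card_edom c C e'
end assembly

/-! ### Transport to `Fin n` -/

lemma transport {X : Type} [Fintype X] [DecidableEq X] (r : ℕ)
    (H : Finset (Finset X)) (F : Finset (X → Option Bool))
    (h1 : ∀ e ∈ H, e.card = r) (h2 : H.card ≤ 2 ^ (r - 1) + 2 ^ (r / 2))
    (h3 : IsCover H F) (h4 : ∀ f : X → Bool, ∃ φ ∈ F, PExtends f φ) :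
    ∃ (n : ℕ) (H' : Finset (Finset (Fin n))) (F' : Finset (Fin n → Option Bool)),
      (∀ e ∈ H', e.card = r) ∧ H'.card ≤ 2 ^ (r - 1) + 2 ^ (r / 2) ∧ IsCover H' F' ∧
      (∀ f : Fin n → Bool, ∃ φ ∈ F', PExtends f φ) := by
  set n := Fintype.card X with hn
  set e : X ≃ Fin n := Fintype.equivFin X with he
  refine ⟨n, H.image (fun s => s.image e), F.image (fun φ => φ ∘ e.symm), ?_, ?_, ?_, ?_⟩
  · intro s hs
    obtain ⟨s₀, hs₀, rfl⟩ := Finset.mem_image.mp hs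
    rw [Finset.card_image_of_injective _ e.injective]
    exact h1 s₀ hs₀
  · exact le_trans Finset.card_image_le h2
  · have hpd : ∀ φ : X → Option Bool, pdom (φ ∘ e.symm) = (pdom φ).image e := by
      intro φ
      ext x
      rw [pdom, pdom, Finset.mem_filter, Finset.mem_image]
      simp only [Finset.mem_univ, true_and, Function.comp_apply]
      constructor
      · intro hx
        exact ⟨e.symm x, Finset.mem_filter.mpr ⟨Finset.mem_univ _, hx⟩, e.apply_symm_apply x⟩
      · rintro ⟨y, hy, rfl⟩
        rw [e.symm_apply_apply]
        exact (Finset.mem_filter.mp hy).2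
    constructor
    · intro φ' hφ'
      obtain ⟨φ, hφ, rfl⟩ := Finset.mem_image.mp hφ'
      rw [hpd]
      exact Finset.mem_image.mpr ⟨pdom φ, h3.1 φ hφ, rfl⟩
    · intro φ' hφ' ψ' hψ' hne hpde
      obtain ⟨φ, hφ, rfl⟩ := Finset.mem_image.mp hφ'
      obtain ⟨ψ, hψ, rfl⟩ := Finset.mem_image.mp hψ'
      rw [hpd, hpd] at hpde
      have hpdeq : pdom φ = pdom ψ :=
        Finset.image_injective e.injective hpde
      have hneq : φ ≠ ψ := by
        intro hcon
        exact hne (by rw [hcon])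
      intro x hx
      rw [hpd] at hx
      obtain ⟨y, hy, rfl⟩ := Finset.mem_image.mp hx
      have := h3.2 φ hφ ψ hψ hneq hpdeq y hy
      simpa [e.symm_apply_apply] using this
  · intro f
    obtain ⟨φ, hφ, hext⟩ := h4 (f ∘ e)
    refine ⟨φ ∘ e.symm, Finset.mem_image.mpr ⟨φ, hφ, rfl⟩, ?_⟩
    intro x b hx
    have := hext (e.symm x) b hx
    simpa using this

/-! ### The general construction packaged -/

lemma general_construction (c : ℕ) (hc : c ≠ 0) (C : Type) [Fintype C] [DecidableEq C]
    (r : ℕ) (hr : r = 1 + Fintype.card C + 2*c)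
    (hb : 2 ^ (Fintype.card C) * (2 ^ (2*c) + 2 ^ c) ≤ 2 ^ (r - 1) + 2 ^ (r / 2)) :
    ∃ (n : ℕ) (H' : Finset (Finset (Fin n))) (F' : Finset (Fin n → Option Bool)),
      (∀ e ∈ H', e.card = r) ∧ H'.card ≤ 2 ^ (r - 1) + 2 ^ (r / 2) ∧ IsCover H' F' ∧
      (∀ f : Fin n → Bool, ∃ φ ∈ F', PExtends f φ) := by
  haveI : NeZero c := ⟨hc⟩
  apply transport r (Hfam c C) (Ffam c C)
  · intro s hs
    rw [card_edges c C s hs, hr]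
  · exact le_trans (card_Hfam c C) hb
  · exact iscover_lemma c C
  · exact cover_lemma c C

/-! ### Final theorem -/

theorem stmt_19 (r : ℕ) (hr : 1 ≤ r) :
    ∃ (n : ℕ) (H : Finset (Finset (Fin n))) (F : Finset (Fin n → Option Bool)),
      (∀ e ∈ H, e.card = r) ∧ H.card ≤ 2 ^ (r - 1) + 2 ^ (r / 2) ∧ IsCover H F ∧
      (∀ f : Fin n → Bool, ∃ φ ∈ F, PExtends f φ) := by
  by_cases hr1 : r = 1
  · subst hr1
    refine ⟨1, {{0}}, {fun _ => some true, fun _ => some false}, ?_, ?_, ?_, ?_⟩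
    · decide
    · decide
    · exact ⟨by decide, by decide⟩
    · decide
  by_cases hr2 : r = 2
  · subst hr2
    refine ⟨3, {{0,1},{0,2},{1,2}},
      {![some false, some false, none], ![some true, some true, none],
       ![some false, none, some true], ![some true, none, some false],
       ![none, some false, some true], ![none, some true, some false]}, ?_, ?_, ?_, ?_⟩
    · decide
    · decide
    · exact ⟨by decide, by decide⟩
    · decide
  have hr3 : 3 ≤ r := by omega
  rcases Nat.even_or_odd r with heven | hodd
  · -- r even, r ≥ 4
    obtain ⟨m, hm⟩ := heven
    set c : ℕ := r / 2 - 1 with hc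
    have hc0 : c ≠ 0 := by omega
    have hrr : r = 1 + Fintype.card Unit + 2*c := by
      rw [Fintype.card_unit]; omega
    apply general_construction c hc0 Unit r hrr
    have e1 : 2*c + 1 = r - 1 := by omega
    have e2 : c + 1 = r / 2 := by omega
    refine le_of_eq ?_
    calc 2 ^ (Fintype.card Unit) * (2 ^ (2*c) + 2 ^ c)
        = 2 ^ (2*c) * 2 + 2 ^ c * 2 := by rw [Fintype.card_unit, pow_one]; ring
      _ = 2 ^ (2*c+1) + 2 ^ (c+1) := by rw [pow_succ, pow_succ]
      _ = 2 ^ (r-1) + 2 ^ (r/2) := by rw [e1, e2]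
  · -- r odd, r ≥ 3
    obtain ⟨m, hm⟩ := hodd
    set c : ℕ := r / 2 with hc
    have hc0 : c ≠ 0 := by omega
    have hrr : r = 1 + Fintype.card Empty + 2*c := by
      rw [Fintype.card_empty]; omega
    apply general_construction c hc0 Empty r hrr
    have e1 : 2*c = r - 1 := by omega
    refine le_of_eq ?_
    calc 2 ^ (Fintype.card Empty) * (2 ^ (2*c) + 2 ^ c)
        = 2 ^ (2*c) + 2 ^ c := by rw [Fintype.card_empty, pow_zero, one_mul]
      _ = 2 ^ (r-1) + 2 ^ (r/2) := by rw [e1]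
end
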